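/- Let α > 0 and β > 0. For every p ∈ D and every V : S → ℝ, one has R_{α,β}(p) ≤ β · log Z_V (weak duality). -/

import Mathlib

open Finset

/-- The average total reward `R_{α,β}(p)`, with the convention `0 · log 0 = 0`. -/
noncomputable def Ravg {S A : Type} [Fintype S] [Fintype A]
    (r : S → A → ℝ) (α β : ℝ) (p : S → A → ℝ) : ℝ :=
  (∑ s, ∑ a, p s a * r s a)
    - α * ∑ s, ∑ a, p s a * Real.log (p s a)
    - (β - α) * ∑ s, ∑ a, p s a * Real.log (∑ b, p s b)

/-- The feasible set `D`. Here `P s a s'` denotes `P(s'|s,a)`. -/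
def Dset {S A : Type} [Fintype S] [Fintype A] (P : S → A → S → ℝ) :
    Set (S → A → ℝ) :=
  {p | (∀ s a, 0 ≤ p s a) ∧ (∑ s, ∑ a, p s a) = 1 ∧
    ∀ s' : S, (∑ s, ∑ a, P s a s' * p s a) = ∑ b, p s' b}

/-- The advantage `A_V(s,a) = r(s,a) + Σ_{s'} V(s') P(s'|s,a) − V(s)`. -/
noncomputable def Adv {S A : Type} [Fintype S]
    (P : S → A → S → ℝ) (r : S → A → ℝ) (V : S → ℝ) (s : S) (a : A) : ℝ :=
  r s a + (∑ s', V s' * P s a s') - V s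

/-- The partition function `Z_V = Σ_s (Σ_a exp(A_V(s,a)/α))^{α/β}`. -/
noncomputable def Zfun {S A : Type} [Fintype S] [Fintype A]
    (P : S → A → S → ℝ) (r : S → A → ℝ) (α β : ℝ) (V : S → ℝ) : ℝ :=
  ∑ s, (∑ a, Real.exp (Adv P r V s a / α)) ^ (α / β)

/-- weak duality: for `α > 0`, `β > 0`, every `p ∈ D` and every
`V : S → ℝ`, one has `R_{α,β}(p) ≤ β log Z_V`. -/


lemma gibbs {ι : Type*} [Fintype ι] [Nonempty ι] (x y : ι → ℝ)
    (hx : ∀ i, 0 ≤ x i) (hy : ∀ i, 0 < y i) :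
    (∑ i, x i * Real.log (y i)) - ∑ i, x i * Real.log (x i)
      ≤ (∑ i, x i) * Real.log (∑ i, y i)
        - (∑ i, x i) * Real.log (∑ i, x i) := by
  set X := ∑ i, x i with hX
  set Y := ∑ i, y i with hYdef
  have hY0 : 0 < Y := Finset.sum_pos (fun i _ => hy i) Finset.univ_nonempty
  rcases eq_or_lt_of_le (Finset.sum_nonneg (fun i _ => hx i) : (0:ℝ) ≤ X) with h0 | hX0
  · have hall : ∀ i, x i = 0 := by
      intro i
      have := (Finset.sum_eq_zero_iff_of_nonneg (fun i _ => hx i)).mp h0.symm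
      exact this i (Finset.mem_univ i)
    have hX0 : X = 0 := h0.symm
    simp [hall, hX0]
  · have key : ∀ i ∈ Finset.univ,
        x i * Real.log (y i) - x i * Real.log (x i)
          - x i * Real.log Y + x i * Real.log X ≤ y i * X / Y - x i := by
      intro i _
      rcases eq_or_lt_of_le (hx i) with h | h
      · rw [← h]
        have : (0:ℝ) ≤ y i * X / Y :=
          div_nonneg (mul_nonneg (hy i).le hX0.le) hY0.le
        simpa using this
      · have ht : (0:ℝ) < y i * X / (x i * Y) :=
          div_pos (mul_pos (hy i) hX0) (mul_pos h hY0)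
        have hlog := Real.log_le_sub_one_of_pos ht
        have hexp : Real.log (y i * X / (x i * Y))
            = Real.log (y i) + Real.log X - Real.log (x i) - Real.log Y := by
          rw [Real.log_div (by nlinarith [mul_pos (hy i) hX0]) (by nlinarith [mul_pos h hY0]),
              Real.log_mul (ne_of_gt (hy i)) (ne_of_gt hX0),
              Real.log_mul (ne_of_gt h) (ne_of_gt hY0)]
          ring
        rw [hexp] at hlog
        have h2 : x i * (Real.log (y i) + Real.log X - Real.log (x i) - Real.log Y)
            ≤ x i * (y i * X / (x i * Y) - 1) :=
          mul_le_mul_of_nonneg_left hlog (le_of_lt h)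
        have h3 : x i * (y i * X / (x i * Y) - 1) = y i * X / Y - x i := by
          field_simp
        nlinarith [h2, h3]
    have hsum := Finset.sum_le_sum key
    rw [Finset.sum_sub_distrib] at hsum
    have hR : ∑ i, y i * X / Y = X := by
      rw [← Finset.sum_div, ← Finset.sum_mul]
      field_simp
      rw [← hYdef, mul_comm]
    have hL : ∑ i : ι, (x i * Real.log (y i) - x i * Real.log (x i)
          - x i * Real.log Y + x i * Real.log X)
        = (∑ i, x i * Real.log (y i)) - (∑ i, x i * Real.log (x i))
          - X * Real.log Y + X * Real.log X := by
      rw [hX]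
      rw [Finset.sum_mul, Finset.sum_mul]
      rw [← Finset.sum_sub_distrib, ← Finset.sum_sub_distrib, ← Finset.sum_add_distrib]
    rw [hL, hR] at hsum
    linarith

theorem weak_duality {S A : Type} [Fintype S] [Fintype A]
    [Nonempty S] [Nonempty A]
    (P : S → A → S → ℝ) (hP0 : ∀ s a s', 0 ≤ P s a s')
    (hP1 : ∀ s a, (∑ s', P s a s') = 1)
    (r : S → A → ℝ) (α β : ℝ) (hα : 0 < α) (hβ : 0 < β)
    (p : S → A → ℝ) (hp : p ∈ Dset P) (V : S → ℝ) :
    Ravg r α β p ≤ β * Real.log (Zfun P r α β V) := by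
  obtain ⟨hp0, hp1, hstat⟩ := hp
  set m : S → ℝ := fun s => ∑ a, p s a with hm
  set W : S → ℝ := fun s => ∑ a, Real.exp (Adv P r V s a / α) with hWdef
  have hW0 : ∀ s, 0 < W s :=
    fun s => Finset.sum_pos (fun a _ => Real.exp_pos _) Finset.univ_nonempty
  have hm0 : ∀ s, 0 ≤ m s := fun s => Finset.sum_nonneg (fun a _ => hp0 s a)
  -- Step A: replace rewards by advantages
  have hA : ∑ s, ∑ a, p s a * r s a = ∑ s, ∑ a, p s a * Adv P r V s a := by
    have e1 : ∀ s a, p s a * Adv P r V s a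
        = p s a * r s a + p s a * (∑ s', V s' * P s a s') - p s a * V s := by
      intro s a; simp [Adv]; ring
    have hswap : ∑ s, ∑ a, p s a * (∑ s', V s' * P s a s')
        = ∑ s, ∑ a, p s a * V s := by
      calc ∑ s, ∑ a, p s a * (∑ s', V s' * P s a s')
          = ∑ s, ∑ a, ∑ s', V s' * (P s a s' * p s a) := by
            refine Finset.sum_congr rfl fun s _ => Finset.sum_congr rfl fun a _ => ?_
            rw [Finset.mul_sum]
            exact Finset.sum_congr rfl fun s' _ => by ring
        _ = ∑ s, ∑ s', ∑ a, V s' * (P s a s' * p s a) :=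
            Finset.sum_congr rfl fun s _ => Finset.sum_comm
        _ = ∑ s', ∑ s, ∑ a, V s' * (P s a s' * p s a) := Finset.sum_comm
        _ = ∑ s', V s' * (∑ s, ∑ a, P s a s' * p s a) := by
            refine Finset.sum_congr rfl fun s' _ => ?_
            rw [Finset.mul_sum]
            exact Finset.sum_congr rfl fun s _ => (Finset.mul_sum _ _ _).symm
        _ = ∑ s', V s' * ∑ b, p s' b := by
            exact Finset.sum_congr rfl fun s' _ => by rw [hstat s']
        _ = ∑ s, ∑ a, p s a * V s := by
            refine Finset.sum_congr rfl fun s _ => ?_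
            rw [Finset.mul_sum]
            exact Finset.sum_congr rfl fun a _ => by ring
    have : ∑ s, ∑ a, p s a * Adv P r V s a
        = ∑ s, ∑ a, (p s a * r s a + p s a * (∑ s', V s' * P s a s') - p s a * V s) := by
      exact Finset.sum_congr rfl fun s _ => Finset.sum_congr rfl fun a _ => e1 s a
    rw [this]
    simp only [Finset.sum_sub_distrib, Finset.sum_add_distrib]
    rw [hswap]
    ring
  -- per-state inequality from Gibbs
  have key1 : ∀ s, (∑ a, p s a * Adv P r V s a) - α * ∑ a, p s a * Real.log (p s a)
      ≤ α * (m s * Real.log (W s)) - α * (m s * Real.log (m s)) := by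
    intro s
    have hg := gibbs (fun a => p s a) (fun a => Real.exp (Adv P r V s a / α))
      (hp0 s) (fun a => Real.exp_pos _)
    simp only [Real.log_exp] at hg
    have h1 : ∑ a, p s a * (Adv P r V s a / α) = (∑ a, p s a * Adv P r V s a) / α := by
      rw [Finset.sum_div]
      exact Finset.sum_congr rfl fun a _ => (mul_div_assoc _ _ _).symm
    rw [h1] at hg
    have := mul_le_mul_of_nonneg_left hg hα.le
    have hαne : α ≠ 0 := ne_of_gt hα
    calc (∑ a, p s a * Adv P r V s a) - α * ∑ a, p s a * Real.log (p s a)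
        = α * ((∑ a, p s a * Adv P r V s a) / α - ∑ a, p s a * Real.log (p s a)) := by
          field_simp
      _ ≤ α * ((∑ a, p s a) * Real.log (∑ a, Real.exp (Adv P r V s a / α))
            - (∑ a, p s a) * Real.log (∑ a, p s a)) := mul_le_mul_of_nonneg_left hg hα.le
      _ = α * (m s * Real.log (W s)) - α * (m s * Real.log (m s)) := by
          simp only [hm, hWdef]; ring
  -- rewrite log(W^(α/β))
  have hrpow : ∀ s, Real.log ((W s) ^ (α / β)) = (α / β) * Real.log (W s) := by
    intro s; rw [Real.log_rpow (hW0 s)]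
  -- Gibbs over states
  have hsum1 : ∑ s, m s = 1 := hp1
  have hg2 := gibbs (fun s => m s) (fun s => (W s) ^ (α / β)) hm0
    (fun s => Real.rpow_pos_of_pos (hW0 s) _)
  rw [hsum1] at hg2
  simp only [one_mul, Real.log_one, mul_zero] at hg2
  -- hg2 : ∑ s, m s * log (W s ^ (α/β)) - ∑ s, m s * log (m s) ≤ log (∑ s, W s ^(α/β)) - 0
  have hZ : Zfun P r α β V = ∑ s, (W s) ^ (α / β) := rfl
  -- assemble
  have hms : ∀ s, ∑ a, p s a * Real.log (∑ b, p s b) = m s * Real.log (m s) := by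
    intro s; rw [← Finset.sum_mul]
  have hRavg : Ravg r α β p
      = ∑ s, ((∑ a, p s a * Adv P r V s a) - α * (∑ a, p s a * Real.log (p s a))
          - (β - α) * (m s * Real.log (m s))) := by
    rw [Ravg, hA]
    simp only [Finset.sum_sub_distrib, hms, Finset.mul_sum]
  rw [hRavg]
  have step : ∑ s, ((∑ a, p s a * Adv P r V s a) - α * (∑ a, p s a * Real.log (p s a))
        - (β - α) * (m s * Real.log (m s)))
      ≤ ∑ s, (β * (m s * Real.log ((W s) ^ (α / β))) - β * (m s * Real.log (m s))) := by
    refine Finset.sum_le_sum fun s _ => ?_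
    have h1 := key1 s
    have h2 : β * (m s * Real.log ((W s) ^ (α / β)))
        = α * (m s * Real.log (W s)) := by
      rw [hrpow s]
      field_simp
    rw [h2]
    linarith [key1 s]
  refine step.trans ?_
  have : ∑ s, (β * (m s * Real.log ((W s) ^ (α / β))) - β * (m s * Real.log (m s)))
      = β * ((∑ s, m s * Real.log ((W s) ^ (α / β))) - ∑ s, m s * Real.log (m s)) := by
    rw [Finset.sum_sub_distrib, ← Finset.mul_sum, ← Finset.mul_sum]
    ring
  rw [this, hZ]
  have := mul_le_mul_of_nonneg_left hg2 hβ.le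
  linarith
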